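/- The map sending a sequence (v_1, ..., v_n) to the sequence (v_n − 1, v_{n−1} − 1, ..., v_1 − 1) is a bijection from the set of sequences with 1 ≤ v_i ≤ i satisfying condition (1) onto the set of inversion codes of 231-avoiding permutations of [n]. -/

import Mathlib

def gc (n k : ℕ) : ℚ := ((k : ℚ) + 1) / (2 * (n : ℚ) + (k : ℚ) + 1) * ((2 * n + k + 1).choose n : ℚ)

def cat (n : ℕ) : ℚ := 1 / ((n : ℚ) + 1) * ((2 * n).choose n : ℚ)

def Cond {n : ℕ} (u : Fin n → ℕ) : Prop :=
  ∀ i j : Fin n, i < j →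
    ¬(1 ≤ (u j : ℤ) - (((j : ℕ) : ℤ) - ((i : ℕ) : ℤ)) ∧
      (u j : ℤ) - (((j : ℕ) : ℤ) - ((i : ℕ) : ℤ)) ≤ (u i : ℤ) - 1)

def invCode {n : ℕ} (p : Equiv.Perm (Fin n)) : Fin n → ℕ :=
  fun i => (Finset.univ.filter (fun j : Fin n => i < j ∧ p j < p i)).card

def Avoids231 {n : ℕ} (p : Equiv.Perm (Fin n)) : Prop :=
  ¬∃ a b c : Fin n, a < b ∧ b < c ∧ p c < p a ∧ p a < p b

namespace Stmt6Aux

open Finset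

variable {n : ℕ}

/-- The set counted by `invCode`. -/
def S (p : Equiv.Perm (Fin n)) (a : Fin n) : Finset (Fin n) :=
  Finset.univ.filter (fun j : Fin n => a < j ∧ p j < p a)

lemma invCode_eq_card (p : Equiv.Perm (Fin n)) (a : Fin n) : invCode p a = (S p a).card := rfl

lemma mem_S {p : Equiv.Perm (Fin n)} {a j : Fin n} : j ∈ S p a ↔ a < j ∧ p j < p a := by
  simp [S]

lemma invCode_le (p : Equiv.Perm (Fin n)) (a : Fin n) : invCode p a ≤ n - 1 - a := by
  rw [invCode_eq_card, ← Fin.card_Ioi a]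
  exact card_le_card (fun j hj => by rw [mem_S] at hj; exact mem_Ioi.2 hj.1)

/-- Value equation: the value of `p a` is the number of smaller values to the left
plus the number of smaller values to the right. -/
lemma val_eq (p : Equiv.Perm (Fin n)) (a : Fin n) :
    (p a : ℕ) = ((Finset.Iio a).filter (fun j => p j < p a)).card + invCode p a := by
  have hT : (Finset.univ.filter (fun j : Fin n => p j < p a)).card = (p a : ℕ) := by
    rw [← Fin.card_Iio (p a)]
    apply Finset.card_bij (fun j _ => p j)
    · intro j hj; simp only [mem_filter, mem_univ, true_and] at hj; exact mem_Iio.2 hj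
    · intro j₁ h₁ j₂ h₂ h; exact p.injective h
    · intro x hx; exact ⟨p.symm x, by simp [mem_Iio.1 hx], by simp⟩
  have hsplit : (Finset.univ.filter (fun j : Fin n => p j < p a))
      = ((Finset.Iio a).filter (fun j => p j < p a)) ∪ S p a := by
    ext j
    simp only [mem_filter, mem_univ, true_and, mem_union, mem_Iio, mem_S]
    constructor
    · intro h
      rcases lt_trichotomy j a with hja | hja | hja
      · exact Or.inl ⟨hja, h⟩
      · exact absurd h (by rw [hja]; exact lt_irrefl _)
      · exact Or.inr ⟨hja, h⟩
    · rintro (⟨_, h⟩ | ⟨_, h⟩) <;> exact h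
  have hdisj : Disjoint ((Finset.Iio a).filter (fun j => p j < p a)) (S p a) := by
    rw [Finset.disjoint_left]
    intro j hj hj'
    rw [mem_filter, mem_Iio] at hj
    rw [mem_S] at hj'
    exact absurd hj'.1 (not_lt_of_gt hj.1)
  rw [invCode_eq_card, ← hT, hsplit, card_union_of_disjoint hdisj]

/-- Auxiliary for injectivity. -/
lemma inj_aux (p q : Equiv.Perm (Fin n)) (i : Fin n)
    (h : invCode p = invCode q) (hlt : ∀ j : Fin n, j < i → p j = q j) : ¬ p i < q i := by
  intro hpq
  set cP : Fin n → ℕ := fun x => ((Finset.Iio i).filter (fun j => p j < x)).card with hcP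
  have hcQ : ∀ x, ((Finset.Iio i).filter (fun j => q j < x)).card = cP x := by
    intro x
    apply Finset.card_bij (fun j _ => j)
    · intro j hj; rw [mem_filter, mem_Iio] at hj ⊢; exact ⟨hj.1, by rw [hlt j hj.1]; exact hj.2⟩
    · intro _ _ _ _ hh; exact hh
    · intro j hj; rw [mem_filter, mem_Iio] at hj
      exact ⟨j, by rw [mem_filter, mem_Iio]; exact ⟨hj.1, by rw [← hlt j hj.1]; exact hj.2⟩, rfl⟩
  have e1 : (p i : ℕ) = cP (p i) + invCode p i := val_eq p i
  have e2 : (q i : ℕ) = cP (q i) + invCode p i := by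
    rw [h]; rw [← hcQ (q i)]; exact val_eq q i
  -- split cP (q i)
  have hsub : (Finset.Iio i).filter (fun j => p j < q i)
      = ((Finset.Iio i).filter (fun j => p j < p i)) ∪
        ((Finset.Iio i).filter (fun j => p i ≤ p j ∧ p j < q i)) := by
    ext j
    simp only [mem_filter, mem_union, mem_Iio]
    constructor
    · intro ⟨hji, hj⟩
      rcases lt_or_ge (p j) (p i) with hc | hc
      · exact Or.inl ⟨hji, hc⟩
      · exact Or.inr ⟨hji, hc, hj⟩
    · rintro (⟨hji, hj⟩ | ⟨hji, hj1, hj2⟩)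
      · exact ⟨hji, lt_trans hj hpq⟩
      · exact ⟨hji, hj2⟩
  have hdisj : Disjoint ((Finset.Iio i).filter (fun j => p j < p i))
      ((Finset.Iio i).filter (fun j => p i ≤ p j ∧ p j < q i)) := by
    rw [Finset.disjoint_left]
    intro j hj hj'
    rw [mem_filter] at hj hj'
    exact absurd hj.2 (not_lt_of_ge hj'.2.1)
  have e3 : cP (q i) = cP (p i) +
      ((Finset.Iio i).filter (fun j => p i ≤ p j ∧ p j < q i)).card := by
    rw [hcP]; simp only []; rw [hsub, card_union_of_disjoint hdisj]
  -- the middle set injects into Ico (p i) (q i) minus {p i}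
  have hM : ((Finset.Iio i).filter (fun j => p i ≤ p j ∧ p j < q i)).card
      ≤ ((Finset.Ico (p i) (q i)).erase (p i)).card := by
    apply Finset.card_le_card_of_injOn (fun j => p j)
    · intro j hj
      rw [Finset.mem_coe, mem_filter, mem_Iio] at hj
      rw [Finset.mem_coe, mem_erase, mem_Ico]
      refine ⟨?_, hj.2.1, hj.2.2⟩
      intro hpj
      exact absurd (p.injective hpj) (ne_of_lt hj.1)
    · intro j₁ _ j₂ _ hh; exact p.injective hh
  have hcard : ((Finset.Ico (p i) (q i)).erase (p i)).card = ((q i : ℕ) - (p i : ℕ)) - 1 := by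
    rw [Finset.card_erase_of_mem (mem_Ico.2 ⟨le_refl _, hpq⟩), Fin.card_Ico]
  have hlt' : (p i : ℕ) < (q i : ℕ) := hpq
  omega

lemma invCode_injective : Function.Injective (invCode (n := n)) := by
  intro p q h
  have key : ∀ m : ℕ, ∀ i : Fin n, (i : ℕ) < m → p i = q i := by
    intro m
    induction m with
    | zero => intro i hi; omega
    | succ m ih =>
      intro i hi
      have hlt : ∀ j : Fin n, j < i → p j = q j := by
        intro j hj
        exact ih j (by have : (j : ℕ) < (i : ℕ) := hj; omega)
      have h1 := inj_aux p q i h hlt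
      have h2 := inj_aux q p i h.symm (fun j hj => (hlt j hj).symm)
      rcases lt_trichotomy (p i) (q i) with hc | hc | hc
      · exact absurd hc h1
      · exact hc
      · exact absurd hc h2
  exact Equiv.ext (fun i => key n i i.isLt)

/-- The code map into the product of `Fin (n - i)`. -/
def toCode (p : Equiv.Perm (Fin n)) : ∀ i : Fin n, Fin (n - (i : ℕ)) :=
  fun i => ⟨invCode p i, by have h1 := invCode_le p i; have h2 := i.isLt; omega⟩

lemma toCode_bijective : Function.Bijective (toCode (n := n)) := by
  rw [Fintype.bijective_iff_injective_and_card]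
  constructor
  · intro p q h
    apply invCode_injective
    funext i
    have := congrFun h i
    exact congrArg Fin.val this
  · rw [Fintype.card_perm, Fintype.card_fin, Fintype.card_pi]
    have : ∀ i : Fin n, Fintype.card (Fin (n - (i : ℕ))) = n - (i : ℕ) := fun i => Fintype.card_fin _
    rw [Finset.prod_congr rfl (fun i _ => this i)]
    rw [Fin.prod_univ_eq_prod_range (fun i => n - i) n]
    have := Finset.prod_range_reflect (fun i => n - i) n
    rw [← this]
    rw [← Finset.prod_range_add_one_eq_factorial n]
    apply Finset.prod_congr rfl
    intro x hx
    rw [Finset.mem_range] at hx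
    omega

lemma code_surj (u : Fin n → ℕ) (hu : ∀ i : Fin n, u i < n - (i : ℕ)) :
    ∃ p : Equiv.Perm (Fin n), invCode p = u := by
  obtain ⟨p, hp⟩ := toCode_bijective.2 (fun i => (⟨u i, hu i⟩ : Fin (n - (i : ℕ))))
  exact ⟨p, funext fun i => congrArg Fin.val (congrFun hp i)⟩

/-- The condition on codes corresponding to `Cond` after reversal. -/
def CondU (u : Fin n → ℕ) : Prop :=
  ∀ a b : Fin n, a < b → (b : ℕ) - (a : ℕ) ≤ u a → u b + ((b : ℕ) - (a : ℕ)) ≤ u a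

lemma avoids_downward {p : Equiv.Perm (Fin n)} (hp : Avoids231 p) :
    ∀ a k j : Fin n, a < k → k < j → p j < p a → p k < p a := by
  intro a k j hak hkj hj
  rcases lt_trichotomy (p k) (p a) with hc | hc | hc
  · exact hc
  · exact absurd (p.injective (Fin.ext (congrArg Fin.val hc))) (ne_of_gt hak)
  · exact absurd ⟨a, k, j, hak, hkj, hj, hc⟩ hp

lemma avoids_condU {p : Equiv.Perm (Fin n)} (hp : Avoids231 p) : CondU (invCode p) := by
  intro a b hab hge
  -- first : p b < p a
  have hpb : p b < p a := by
    by_contra hc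
    push_neg at hc
    have hne : p a ≠ p b := fun h => absurd (p.injective h) (ne_of_lt hab)
    have hc' : p a < p b := lt_of_le_of_ne hc hne
    -- then S p a ⊆ Ioo a b
    have hsub : S p a ⊆ Finset.Ioo a b := by
      intro j hj
      rw [mem_S] at hj
      rw [mem_Ioo]
      refine ⟨hj.1, ?_⟩
      rcases lt_trichotomy j b with h1 | h1 | h1
      · exact h1
      · exact absurd (h1 ▸ hj.2) (not_lt_of_gt hc')
      · exact absurd (avoids_downward hp a b j hab h1 hj.2) (not_lt_of_gt hc')
    have h1 : invCode p a ≤ (b : ℕ) - (a : ℕ) - 1 := by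
      rw [invCode_eq_card]
      calc (S p a).card ≤ (Finset.Ioo a b).card := card_le_card hsub
        _ = (b : ℕ) - (a : ℕ) - 1 := Fin.card_Ioo a b
    have hab' : (a : ℕ) < (b : ℕ) := hab
    omega
  -- Ioc a b ⊆ S p a
  have hIoc : Finset.Ioc a b ⊆ S p a := by
    intro k hk
    rw [mem_Ioc] at hk
    rw [mem_S]
    refine ⟨hk.1, ?_⟩
    rcases eq_or_lt_of_le hk.2 with h1 | h1
    · rw [h1]; exact hpb
    · exact avoids_downward hp a k b hk.1 h1 hpb
  -- S p b ⊆ S p a \ Ioc a b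
  have hsub2 : S p b ⊆ S p a \ Finset.Ioc a b := by
    intro j hj
    rw [mem_S] at hj
    rw [mem_sdiff, mem_S, mem_Ioc]
    exact ⟨⟨lt_trans hab hj.1, lt_trans hj.2 hpb⟩, fun h => absurd h.2 (not_le_of_gt hj.1)⟩
  have h1 : invCode p b ≤ invCode p a - (Finset.Ioc a b).card := by
    rw [invCode_eq_card, invCode_eq_card]
    calc (S p b).card ≤ (S p a \ Finset.Ioc a b).card := card_le_card hsub2
      _ = (S p a).card - (Finset.Ioc a b).card := card_sdiff_of_subset hIoc
  rw [Fin.card_Ioc] at h1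
  omega

lemma condU_avoids {p : Equiv.Perm (Fin n)} (h : CondU (invCode p)) : Avoids231 p := by
  by_contra hc
  rw [Avoids231, not_not] at hc
  obtain ⟨a, b, c, hab, hbc, hca, hab'⟩ := hc
  -- take the minimal b
  set F : Finset (Fin n) :=
    Finset.univ.filter (fun j : Fin n => a < j ∧ p a < p j ∧ ∃ c' : Fin n, j < c' ∧ p c' < p a)
    with hF
  have hFne : F.Nonempty := ⟨b, by
    rw [hF, mem_filter]; exact ⟨mem_univ _, hab, hab', c, hbc, hca⟩⟩
  set b0 := F.min' hFne with hb0
  have hb0F : b0 ∈ F := F.min'_mem hFne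
  rw [hF, mem_filter] at hb0F
  obtain ⟨-, hab0, hpab0, c0, hb0c0, hc0⟩ := hb0F
  -- every k strictly between a and b0 has p k < p a
  have hmid : ∀ k : Fin n, a < k → k < b0 → p k < p a := by
    intro k hak hkb0
    rcases lt_trichotomy (p k) (p a) with h1 | h1 | h1
    · exact h1
    · exact absurd (p.injective h1) (ne_of_gt hak)
    · have : k ∈ F := by
        rw [hF, mem_filter]
        exact ⟨mem_univ _, hak, h1, c0, lt_trans hkb0 hb0c0, hc0⟩
      exact absurd (F.min'_le k this) (not_le_of_gt hkb0)
  -- u a ≥ b0 - a : insert c0 (Ioo a b0) ⊆ S p a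
  have hins : insert c0 (Finset.Ioo a b0) ⊆ S p a := by
    intro j hj
    rw [mem_insert] at hj
    rw [mem_S]
    rcases hj with hj | hj
    · subst hj; exact ⟨lt_trans hab0 hb0c0, hc0⟩
    · rw [mem_Ioo] at hj; exact ⟨hj.1, hmid j hj.1 hj.2⟩
  have hc0notmem : c0 ∉ Finset.Ioo a b0 := by
    rw [mem_Ioo]; intro h; exact absurd hb0c0 (not_lt_of_gt h.2)
  have hua : (b0 : ℕ) - (a : ℕ) ≤ invCode p a := by
    rw [invCode_eq_card]
    have h1 : (insert c0 (Finset.Ioo a b0)).card ≤ (S p a).card := card_le_card hins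
    rw [card_insert_of_notMem hc0notmem, Fin.card_Ioo] at h1
    have : (a : ℕ) < (b0 : ℕ) := hab0
    omega
  -- S p a ⊆ Ioo a b0 ∪ S p b0
  have hsub : S p a ⊆ Finset.Ioo a b0 ∪ S p b0 := by
    intro j hj
    rw [mem_S] at hj
    rw [mem_union, mem_Ioo, mem_S]
    rcases lt_trichotomy j b0 with h1 | h1 | h1
    · exact Or.inl ⟨hj.1, h1⟩
    · exact absurd (h1 ▸ hj.2) (not_lt_of_gt hpab0)
    · exact Or.inr ⟨h1, lt_trans hj.2 hpab0⟩
  have hub : invCode p a ≤ ((b0 : ℕ) - (a : ℕ) - 1) + invCode p b0 := by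
    rw [invCode_eq_card, invCode_eq_card]
    calc (S p a).card ≤ (Finset.Ioo a b0 ∪ S p b0).card := card_le_card hsub
      _ ≤ (Finset.Ioo a b0).card + (S p b0).card := card_union_le _ _
      _ = ((b0 : ℕ) - (a : ℕ) - 1) + (S p b0).card := by rw [Fin.card_Ioo]
  have := h a b0 hab0 hua
  have : (a : ℕ) < (b0 : ℕ) := hab0
  omega

end Stmt6Aux

theorem stmt6 (n : ℕ) :
    Set.BijOn (fun (v : Fin n → ℕ) (i : Fin n) => v i.rev - 1)
      {v : Fin n → ℕ | (∀ i : Fin n, 1 ≤ v i ∧ v i ≤ (i : ℕ) + 1) ∧ Cond v}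
      {u : Fin n → ℕ | ∃ p : Equiv.Perm (Fin n), Avoids231 p ∧ u = invCode p} := by
  open Stmt6Aux in
  refine ⟨?_, ?_, ?_⟩
  · -- MapsTo
    rintro v ⟨hv, hcond⟩
    set u : Fin n → ℕ := fun i => v i.rev - 1 with hu
    have hbound : ∀ i : Fin n, u i < n - (i : ℕ) := by
      intro i
      have h1 := (hv i.rev).1
      have h2 := (hv i.rev).2
      have h3 : (i.rev : ℕ) = n - ((i : ℕ) + 1) := Fin.val_rev i
      have h4 := i.isLt
      simp only [hu]
      omega
    obtain ⟨p, hp⟩ := Stmt6Aux.code_surj u hbound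
    have hcondU : Stmt6Aux.CondU u := by
      intro a b hab hge
      by_contra hco
      apply hcond b.rev a.rev (Fin.rev_lt_rev.2 hab)
      have h1 := (hv a.rev).1
      have h2 := (hv b.rev).1
      have ha : (a.rev : ℕ) = n - ((a : ℕ) + 1) := Fin.val_rev a
      have hb : (b.rev : ℕ) = n - ((b : ℕ) + 1) := Fin.val_rev b
      have hab' : (a : ℕ) < (b : ℕ) := hab
      have hbn := b.isLt
      simp only [hu] at hge hco
      constructor <;> push_cast <;> omega
    exact ⟨p, Stmt6Aux.condU_avoids (hp ▸ hcondU), hp.symm⟩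
  · -- InjOn
    rintro v₁ ⟨hv₁, -⟩ v₂ ⟨hv₂, -⟩ h
    funext i
    have := congrFun h i.rev
    simp only [Fin.rev_rev] at this
    have h1 := (hv₁ i).1
    have h2 := (hv₂ i).1
    omega
  · -- SurjOn
    rintro u ⟨p, hp, rfl⟩
    set v : Fin n → ℕ := fun i => invCode p i.rev + 1 with hv
    refine ⟨v, ⟨⟨?_, ?_⟩, ?_⟩⟩
    · intro i
      have h1 := Stmt6Aux.invCode_le p i.rev
      have h2 : (i.rev : ℕ) = n - ((i : ℕ) + 1) := Fin.val_rev i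
      have h3 := i.isLt
      simp only [hv]
      omega
    · intro i j hij
      rintro ⟨h1, h2⟩
      have hcondU := Stmt6Aux.avoids_condU hp
      have hab : j.rev < i.rev := Fin.rev_lt_rev.2 hij
      have hi : (i.rev : ℕ) = n - ((i : ℕ) + 1) := Fin.val_rev i
      have hj : (j.rev : ℕ) = n - ((j : ℕ) + 1) := Fin.val_rev j
      have hij' : (i : ℕ) < (j : ℕ) := hij
      have hjn := j.isLt
      simp only [hv] at h1 h2
      have hge : (i.rev : ℕ) - (j.rev : ℕ) ≤ invCode p j.rev := by
        push_cast at h1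
        omega
      have := hcondU j.rev i.rev hab hge
      push_cast at h1 h2
      omega
    · funext i
      simp only [hv, Fin.rev_rev]
      omega
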